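/- Every simple graph Γ = (V, E) on a finite vertex set satisfies α(Γ) ≥ Σ_{v ∈ V} 1/(1 + d(v)), where α(Γ) is the independence number of Γ and d(v) is the degree of the vertex v. -/

import Mathlib

private theorem caro_wei_aux {V : Type*} [Fintype V] [DecidableEq V] (G : SimpleGraph V)
    [DecidableRel G.Adj] (T : Finset V) :
    ∃ s : Finset V, s ⊆ T ∧ (∀ a ∈ s, ∀ b ∈ s, ¬ G.Adj a b) ∧
      (∑ v ∈ T, (1 : ℚ) / (1 + (G.neighborFinset v ∩ T).card)) ≤ s.card := by
  induction T using Finset.strongInduction with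
  | _ T ih =>
  rcases T.eq_empty_or_nonempty with rfl | hT
  · exact ⟨∅, by simp⟩
  · obtain ⟨v, hv, hmin⟩ := T.exists_min_image (fun u => ((G.neighborFinset u ∩ T).card : ℚ)) hT
    set N : Finset V := insert v (G.neighborFinset v ∩ T) with hN
    have hNT : N ⊆ T := by
      intro u hu
      rcases Finset.mem_insert.mp hu with rfl | hu
      · exact hv
      · exact (Finset.mem_inter.mp hu).2
    set T' := T \ N with hT'
    have hvN : v ∈ N := Finset.mem_insert_self _ _
    have hsub : T' ⊂ T := Finset.ssubset_iff_of_subset (Finset.sdiff_subset)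
      |>.mpr ⟨v, hv, by simp [hT', hvN]⟩
    obtain ⟨s, hsT, hind, hcard⟩ := ih T' hsub
    have hvs : v ∉ s := fun h => (Finset.mem_sdiff.mp (hsT h)).2 hvN
    have hnadj : ∀ b ∈ s, ¬ G.Adj v b := by
      intro b hb hadj
      have hbT' := hsT hb
      have := Finset.mem_sdiff.mp hbT'
      exact this.2 (Finset.mem_insert_of_mem (Finset.mem_inter.mpr
        ⟨(G.mem_neighborFinset v b).mpr hadj, this.1⟩))
    refine ⟨insert v s, ?_, ?_, ?_⟩
    · intro u hu
      rcases Finset.mem_insert.mp hu with rfl | hu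
      · exact hv
      · exact (Finset.mem_sdiff.mp (hsT hu)).1
    · intro a ha b hb
      rcases Finset.mem_insert.mp ha with rfl | ha
      · rcases Finset.mem_insert.mp hb with rfl | hb
        · exact G.irrefl
        · exact hnadj b hb
      · rcases Finset.mem_insert.mp hb with hb | hb
        · intro h; rw [hb] at h; exact hnadj a ha h.symm
        · exact hind a ha b hb
    · have hcardN : (N.card : ℚ) = (G.neighborFinset v ∩ T).card + 1 := by
        have : v ∉ G.neighborFinset v ∩ T := by simp
        rw [hN, Finset.card_insert_of_notMem this]
        push_cast; ring
      have hsplit : (∑ u ∈ T, (1 : ℚ) / (1 + (G.neighborFinset u ∩ T).card))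
          = (∑ u ∈ T', (1 : ℚ) / (1 + (G.neighborFinset u ∩ T).card))
            + ∑ u ∈ N, (1 : ℚ) / (1 + (G.neighborFinset u ∩ T).card) := by
        rw [hT', Finset.sum_sdiff hNT]
      have hpos : ∀ u : V, (0 : ℚ) < 1 + (G.neighborFinset u ∩ T).card := by
        intro u; positivity
      have h1 : (∑ u ∈ T', (1 : ℚ) / (1 + (G.neighborFinset u ∩ T).card))
          ≤ ∑ u ∈ T', (1 : ℚ) / (1 + (G.neighborFinset u ∩ T').card) := by
        apply Finset.sum_le_sum
        intro u hu
        apply one_div_le_one_div_of_le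
        · positivity
        · have : (G.neighborFinset u ∩ T').card ≤ (G.neighborFinset u ∩ T).card :=
            Finset.card_le_card (Finset.inter_subset_inter_left (Finset.sdiff_subset))
          exact_mod_cast Nat.add_le_add_left this 1
      have h2 : (∑ u ∈ N, (1 : ℚ) / (1 + (G.neighborFinset u ∩ T).card)) ≤ 1 := by
        calc (∑ u ∈ N, (1 : ℚ) / (1 + (G.neighborFinset u ∩ T).card))
            ≤ ∑ u ∈ N, (1 : ℚ) / (1 + (G.neighborFinset v ∩ T).card) := by
              apply Finset.sum_le_sum
              intro u hu
              apply one_div_le_one_div_of_le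
              · positivity
              · linarith [hmin u (hNT hu)]
          _ = N.card / (1 + (G.neighborFinset v ∩ T).card) := by
              rw [Finset.sum_const, nsmul_eq_mul, mul_one_div]
          _ = 1 := by
              rw [hcardN]; field_simp; ring
      have hcard' : ((insert v s).card : ℚ) = s.card + 1 := by
        rw [Finset.card_insert_of_notMem hvs]; push_cast; ring
      rw [hsplit, hcard']
      linarith

theorem stmt_3 {V : Type*} [Fintype V] (G : SimpleGraph V) [DecidableRel G.Adj] :
    ∃ s : Finset V, (∀ a ∈ s, ∀ b ∈ s, ¬ G.Adj a b) ∧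
      (∑ v : V, (1 : ℚ) / (1 + G.degree v)) ≤ s.card := by
  classical
  obtain ⟨s, _, hind, hcard⟩ := caro_wei_aux G Finset.univ
  refine ⟨s, hind, ?_⟩
  simpa only [SimpleGraph.degree, Finset.inter_univ] using hcard
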